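/- Let n ≥ 2 and let g = diag(1,−1,−1,…,−1) be the Minkowski metric matrix of size (n+1)×(n+1) (indices 0,1,…,n). Consider the Lorentz Lie algebra so(1,n) = { X ∈ M_{n+1}(ℝ) : Xᵀg + gX = 0 } with bracket the matrix commutator. For every ν with 1 ≤ ν ≤ n, the boost generator m_{0ν} = E(0,ν) + E(ν,0) is an essential element of so(1,n). -/

import Mathlib

open Matrix

attribute [local instance] LieRing.ofAssociativeRing

/-- The linear span of all brackets `⁅a, b⁆` with `a ∈ A`, `b ∈ B`. -/
def bracketSpan {L : Type*} [LieRing L] [LieAlgebra ℝ L] (A B : Submodule ℝ L) :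
    Submodule ℝ L :=
  Submodule.span ℝ {x | ∃ a ∈ A, ∃ b ∈ B, x = ⁅a, b⁆}

/-- `m` is essential: `ad m` is diagonalizable over `ℝ` and
`ℝ·m + [m,g] + [[m,g],[m,g]] = g`. -/
def Essential {L : Type*} [LieRing L] [LieAlgebra ℝ L] (m : L) : Prop :=
  (⨆ c : ℝ, (LieAlgebra.ad ℝ L m).eigenspace c) = ⊤ ∧
    Submodule.span ℝ {m} ⊔ LinearMap.range (LieAlgebra.ad ℝ L m) ⊔
      bracketSpan (LinearMap.range (LieAlgebra.ad ℝ L m))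
        (LinearMap.range (LieAlgebra.ad ℝ L m)) = ⊤

/-- The real Lie algebra of matrices `X` with `Xᵀ * J + J * X = 0`. -/
def lieSO {ι : Type*} [Fintype ι] [DecidableEq ι] (J : Matrix ι ι ℝ) :
    LieSubalgebra ℝ (Matrix ι ι ℝ) where
  carrier := {X | Xᵀ * J + J * X = 0}
  zero_mem' := by simp
  add_mem' := by
    intro a b ha hb
    simp only [Set.mem_setOf_eq] at ha hb ⊢
    rw [transpose_add, add_mul, mul_add, add_add_add_comm, ha, hb, add_zero]
  smul_mem' := by
    intro r X hX
    simp only [Set.mem_setOf_eq] at hX ⊢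
    rw [transpose_smul, smul_mul, Matrix.mul_smul, ← smul_add, hX, smul_zero]
  lie_mem' := by
    intro X Y hX hY
    simp only [Set.mem_setOf_eq] at hX hY ⊢
    have hX' : Xᵀ * J = -(J * X) := eq_neg_of_add_eq_zero_left hX
    have hY' : Yᵀ * J = -(J * Y) := eq_neg_of_add_eq_zero_left hY
    have h1 : Yᵀ * Xᵀ * J = J * (Y * X) := by
      rw [mul_assoc, hX', mul_neg, ← mul_assoc, hY', neg_mul, neg_neg, mul_assoc]
    have h2 : Xᵀ * Yᵀ * J = J * (X * Y) := by
      rw [mul_assoc, hY', mul_neg, ← mul_assoc, hX', neg_mul, neg_neg, mul_assoc]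
    rw [Ring.lie_def, transpose_sub, transpose_mul, transpose_mul, sub_mul, h1, h2,
      mul_sub]
    abel

/-- The symmetric "boost" matrix `E(a,b) + E(b,a)` lies in `lieSO (diagonal d)`
whenever `d a = 1` and `d b = -1`. -/
lemma boost_mem_lieSO {ι : Type*} [Fintype ι] [DecidableEq ι] (d : ι → ℝ) (a b : ι)
    (ha : d a = 1) (hb : d b = -1) :
    (Matrix.single a b (1 : ℝ) + Matrix.single b a 1) ∈ lieSO (diagonal d) := by
  have hab : a ≠ b := by intro h; rw [h, hb] at ha; norm_num at ha
  show _ᵀ * _ + _ * _ = 0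
  ext i j
  simp only [transpose_add, add_mul, mul_add, Matrix.add_apply, mul_diagonal,
    diagonal_mul, transpose_apply, Matrix.zero_apply, Matrix.single, of_apply]
  split_ifs <;> simp_all

namespace SO1nAux

set_option linter.unusedSectionVars false

section

variable {ι : Type*} [Fintype ι] [DecidableEq ι]

/-- boost-type matrix `e_a vᵀ + v e_aᵀ`. -/
def Bv (a : ι) (v : ι → ℝ) : Matrix ι ι ℝ :=
  vecMulVec (Pi.single a 1) v + vecMulVec v (Pi.single a 1)

/-- rotation-type matrix `e_b vᵀ - v e_bᵀ`. -/
def Rv (b : ι) (v : ι → ℝ) : Matrix ι ι ℝ :=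
  vecMulVec (Pi.single b 1) v - vecMulVec v (Pi.single b 1)

lemma vvm (u v w x : ι → ℝ) :
    vecMulVec u v * vecMulVec w x = (v ⬝ᵥ w) • vecMulVec u x := by
  ext i j
  simp only [mul_apply, vecMulVec_apply, Matrix.smul_apply, smul_eq_mul, dotProduct,
    Finset.sum_mul]
  exact Finset.sum_congr rfl (fun k _ => by ring)

lemma vv_mul (u v : ι → ℝ) (M : Matrix ι ι ℝ) :
    vecMulVec u v * M = vecMulVec u (vecMul v M) := by
  ext i j
  simp only [mul_apply, vecMulVec_apply, vecMul, dotProduct, Finset.mul_sum]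
  exact Finset.sum_congr rfl (fun k _ => by ring)

lemma mul_vv (u v : ι → ℝ) (M : Matrix ι ι ℝ) :
    M * vecMulVec u v = vecMulVec (mulVec M u) v := by
  ext i j
  simp only [mul_apply, vecMulVec_apply, mulVec, dotProduct, Finset.sum_mul]
  exact Finset.sum_congr rfl (fun k _ => by ring)

variable (a b : ι)

lemma lie_m_Rv (hab : a ≠ b) (v : ι → ℝ) (hva : v a = 0) (hvb : v b = 0) :
    ⁅Bv a (Pi.single b 1), Rv b v⁆ = Bv a v := by
  simp only [Ring.lie_def, Bv, Rv, add_mul, mul_add, sub_mul, mul_sub, add_sub_cancel, vvm,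
    single_dotProduct, dotProduct_single, Pi.single_apply, one_mul, mul_one, hva, hvb,
    if_neg hab, if_neg (Ne.symm hab)]
  simp only [eq_self_iff_true, if_true, if_pos rfl, zero_smul, one_smul, smul_zero,
    sub_zero, zero_sub, add_zero, zero_add]
  module

lemma lie_m_Bv (hab : a ≠ b) (v : ι → ℝ) (hva : v a = 0) (hvb : v b = 0) :
    ⁅Bv a (Pi.single b 1), Bv a v⁆ = Rv b v := by
  simp only [Ring.lie_def, Bv, Rv, add_mul, mul_add, sub_mul, mul_sub, vvm,
    single_dotProduct, dotProduct_single, Pi.single_apply, one_mul, mul_one, hva, hvb,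
    if_neg hab, if_neg (Ne.symm hab)]
  simp only [eq_self_iff_true, if_true, if_pos rfl, zero_smul, one_smul, smul_zero,
    sub_zero, zero_sub, add_zero, zero_add]

lemma lie_Bv_Bv (v w : ι → ℝ) (hva : v a = 0) (hwa : w a = 0) :
    ⁅Bv a v, Bv a w⁆ = vecMulVec v w - vecMulVec w v := by
  simp only [Ring.lie_def, Bv, add_mul, mul_add, vvm,
    single_dotProduct, dotProduct_single, Pi.single_apply, one_mul, mul_one, hva, hwa]
  simp only [eq_self_iff_true, if_true, if_pos rfl, zero_smul, one_smul, smul_zero,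
    sub_zero, zero_sub, add_zero, zero_add]
  rw [dotProduct_comm w v]
  module

lemma mem_Bv (v : ι → ℝ) (hva : v a = 0) :
    Bv a v ∈ lieSO (diagonal fun i => if i = a then (1 : ℝ) else -1) := by
  show _ᵀ * _ + _ * _ = 0
  ext i j
  simp only [Bv, transpose_add, transpose_apply, add_mul, mul_add, Matrix.add_apply,
    mul_diagonal, diagonal_mul, Matrix.zero_apply, vecMulVec_apply, Pi.single_apply]
  by_cases hi : i = a <;> by_cases hj : j = a <;> simp [hi, hj, hva] <;> ring

lemma mem_Rv (hab : b ≠ a) (v : ι → ℝ) (hva : v a = 0) :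
    Rv b v ∈ lieSO (diagonal fun i => if i = a then (1 : ℝ) else -1) := by
  show _ᵀ * _ + _ * _ = 0
  ext i j
  simp only [Rv, transpose_sub, transpose_apply, sub_mul, mul_sub, Matrix.sub_apply,
    mul_diagonal, diagonal_mul, Matrix.zero_apply, vecMulVec_apply, Pi.single_apply,
    Matrix.add_apply]
  by_cases hi : i = a <;> by_cases hj : j = a <;>
    · simp [hi, hj, hva, hab, Ne.symm hab]
      try split_ifs <;> ring

/-- pointwise relation for membership in `lieSO (diagonal d)`. -/
lemma rel {X : Matrix ι ι ℝ}
    (hX : X ∈ lieSO (diagonal fun i => if i = a then (1 : ℝ) else -1)) (i j : ι) :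
    X j i * (if j = a then (1 : ℝ) else -1) + (if i = a then (1 : ℝ) else -1) * X i j = 0 := by
  have hX' : Xᵀ * (diagonal fun i => if i = a then (1 : ℝ) else -1) +
      (diagonal fun i => if i = a then (1 : ℝ) else -1) * X = 0 := hX
  have := Matrix.ext_iff.mpr hX' i j
  simpa [mul_diagonal, diagonal_mul] using this

lemma diag_zero {X : Matrix ι ι ℝ}
    (hX : X ∈ lieSO (diagonal fun i => if i = a then (1 : ℝ) else -1)) (i : ι) :
    X i i = 0 := by
  have h := rel a hX i i
  by_cases hi : i = a
  · subst hi; simp at h; linarith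
  · simp [hi] at h; linarith

lemma symm_a {X : Matrix ι ι ℝ}
    (hX : X ∈ lieSO (diagonal fun i => if i = a then (1 : ℝ) else -1)) (j : ι)
    (hj : j ≠ a) : X a j = X j a := by
  have h := rel a hX a j
  simp [hj] at h
  linarith

lemma anti {X : Matrix ι ι ℝ}
    (hX : X ∈ lieSO (diagonal fun i => if i = a then (1 : ℝ) else -1)) (i j : ι)
    (hi : i ≠ a) (hj : j ≠ a) : X j i = -X i j := by
  have h := rel a hX i j
  simp [hi, hj] at h
  linarith

/-- abstract ring identity: `ad(m)³ = ad(m)` given `m³ = m` and the swap relation. -/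
lemma ring_id {R : Type*} [Ring R] (m x : R) (h3 : m * m * m = m)
    (hsw : m * x * (m * m) = m * m * x * m) : ⁅m, ⁅m, ⁅m, x⁆⁆⁆ = ⁅m, x⁆ := by
  have A : ∀ y : R, m * (m * (m * y)) = m * y := fun y => by
    rw [← mul_assoc, ← mul_assoc, h3]
  have B : m * (m * m) = m := by rw [← mul_assoc, h3]
  have C : m * (m * (x * m)) = m * (x * (m * m)) := by
    have := hsw.symm
    simpa only [mul_assoc] using this
  simp only [Ring.lie_def, mul_sub, sub_mul, mul_assoc, A, B, C]
  abel

lemma mm_sq (hab : b ≠ a) :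
    Bv a (Pi.single b 1) * Bv a (Pi.single b 1) =
      vecMulVec (Pi.single a 1) (Pi.single a 1) +
        vecMulVec (Pi.single b 1) (Pi.single b 1) := by
  simp only [Bv, add_mul, mul_add, vvm, single_dotProduct, Pi.single_apply, one_mul,
    if_neg hab, if_neg (Ne.symm hab), eq_self_iff_true, if_true, zero_smul, one_smul,
    add_zero, zero_add]
  abel

lemma mm_cube (hab : b ≠ a) :
    Bv a (Pi.single b 1) * Bv a (Pi.single b 1) * Bv a (Pi.single b 1) =
      Bv a (Pi.single b 1) := by
  rw [mm_sq a b hab]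
  simp only [Bv, add_mul, mul_add, vvm, single_dotProduct, Pi.single_apply, one_mul,
    if_neg hab, if_neg (Ne.symm hab), eq_self_iff_true, if_true, zero_smul, one_smul,
    smul_zero, add_zero, zero_add]

lemma swap_rel (hab : b ≠ a) {X : Matrix ι ι ℝ}
    (hX : X ∈ lieSO (diagonal fun i => if i = a then (1 : ℝ) else -1)) :
    Bv a (Pi.single b 1) * X * (Bv a (Pi.single b 1) * Bv a (Pi.single b 1)) =
      Bv a (Pi.single b 1) * Bv a (Pi.single b 1) * X * Bv a (Pi.single b 1) := by
  have haa : X a a = 0 := diag_zero a hX a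
  have hbb : X b b = 0 := diag_zero a hX b
  have hsymm : X a b = X b a := symm_a a hX b hab
  have hL : Bv a (Pi.single b 1) * X =
      vecMulVec (Pi.single a 1) (X b) + vecMulVec (Pi.single b 1) (X a) := by
    simp only [Bv, add_mul, vv_mul, single_vecMul, one_smul, one_mul]; rfl
  have hR : Bv a (Pi.single b 1) * Bv a (Pi.single b 1) * X =
      vecMulVec (Pi.single a 1) (X a) + vecMulVec (Pi.single b 1) (X b) := by
    rw [mm_sq a b hab]
    simp only [add_mul, vv_mul, single_vecMul, one_smul, one_mul]; rfl
  rw [hR, hL, mm_sq a b hab]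
  simp only [Bv, add_mul, mul_add, vvm, dotProduct_single, single_dotProduct, mul_one,
    one_mul, haa, hbb, hsymm, zero_smul, add_zero, zero_add]
  abel

lemma cube (hab : b ≠ a) {X : Matrix ι ι ℝ}
    (hX : X ∈ lieSO (diagonal fun i => if i = a then (1 : ℝ) else -1)) :
    ⁅Bv a (Pi.single b 1), ⁅Bv a (Pi.single b 1), ⁅Bv a (Pi.single b 1), X⁆⁆⁆ =
      ⁅Bv a (Pi.single b 1), X⁆ := by
  exact ring_id _ _ (mm_cube a b hab) (swap_rel a b hab hX)

lemma K_entries (hab : b ≠ a) {X : Matrix ι ι ℝ}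
    (hX : X ∈ lieSO (diagonal fun i => if i = a then (1 : ℝ) else -1)) (i j : ι) :
    (X - X a b • Bv a (Pi.single b 1)
      - Bv a (fun k => if k = a ∨ k = b then 0 else X a k)
      - Rv b (fun k => if k = a ∨ k = b then 0 else X b k)) i j
      = if i = a ∨ i = b ∨ j = a ∨ j = b then 0 else X i j := by
  have hd := diag_zero a hX
  have hs := symm_a a hX
  have han := anti a hX
  simp only [Matrix.sub_apply, Matrix.smul_apply, smul_eq_mul, Bv, Rv, Matrix.add_apply,
    vecMulVec_apply, Pi.single_apply]
  by_cases hia : i = a <;> by_cases hib : i = b <;> by_cases hja : j = a <;>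
      by_cases hjb : j = b <;>
    simp [hia, hib, hja, hjb, hab, Ne.symm hab, hd a, hd b] <;>
    first
      | linarith [hs b hab]
      | linarith [hs j hja]
      | linarith [hs i hia]
      | linarith [han i b hia hab]
      | linarith [han b j hab hja]
      | simp_all

lemma Ksum (K : Matrix ι ι ℝ) (hanti : ∀ i j, K j i = -K i j)
    (hzero : ∀ i j, i = a ∨ i = b ∨ j = a ∨ j = b → K i j = 0) :
    K = ∑ j : ι, (2⁻¹ : ℝ) •
      (vecMulVec (fun i => K i j) (if j = a ∨ j = b then 0 else Pi.single j 1)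
        - vecMulVec (if j = a ∨ j = b then 0 else Pi.single j 1) (fun i => K i j)) := by
  ext i k
  rw [Matrix.sum_apply]
  have h1 : ∀ j : ι, ((2⁻¹ : ℝ) •
      (vecMulVec (fun i => K i j) (if j = a ∨ j = b then 0 else Pi.single j 1)
        - vecMulVec (if j = a ∨ j = b then 0 else Pi.single j 1) (fun i => K i j))) i k
      = 2⁻¹ * (K i j * (Pi.single j 1 : ι → ℝ) k - (Pi.single j 1 : ι → ℝ) i * K k j) := by
    intro j
    by_cases hj : j = a ∨ j = b
    · simp [hj, hzero i j (by tauto), hzero k j (by tauto), vecMulVec_apply]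
    · simp [hj, vecMulVec_apply]
  rw [Finset.sum_congr rfl (fun j _ => h1 j), ← Finset.mul_sum, Finset.sum_sub_distrib]
  simp only [Pi.single_apply, mul_ite, ite_mul, mul_one, mul_zero, one_mul, zero_mul,
    Finset.sum_ite_eq, Finset.sum_ite_eq', Finset.mem_univ, if_true]
  rw [hanti i k]
  ring

theorem main_aux (hab : b ≠ a)
    (M : lieSO (diagonal fun i => if i = a then (1 : ℝ) else -1))
    (hM : (M : Matrix ι ι ℝ) = Bv a (Pi.single b 1)) : Essential M := by
  obtain ⟨Mv, hMem⟩ := M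
  have hMv : Mv = Bv a (Pi.single b 1) := hM
  subst hMv
  set L : LieSubalgebra ℝ (Matrix ι ι ℝ) :=
    lieSO (diagonal fun i : ι => if i = a then (1 : ℝ) else -1) with hLdef
  set f := LieAlgebra.ad ℝ L (⟨Bv a (Pi.single b 1), hMem⟩ : L) with hfdef
  have hf : ∀ x : L, ((f x : L) : Matrix ι ι ℝ) =
      ⁅Bv a (Pi.single b 1), (x : Matrix ι ι ℝ)⁆ := by
    intro x
    rw [hfdef, LieAlgebra.ad_apply, LieSubalgebra.coe_bracket]
  have hcube : ∀ x : L, f (f (f x)) = f x := by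
    intro x
    apply Subtype.ext
    simp only [hf]
    exact cube a b hab x.2
  constructor
  · -- diagonalizability
    rw [← hfdef]
    refine eq_top_iff.mpr fun x _ => ?_
    have h0 : x - f (f x) ∈ Module.End.eigenspace f 0 :=
      Module.End.mem_eigenspace_iff.mpr
        (by rw [map_sub, hcube, sub_self, zero_smul])
    have h1 : (2⁻¹ : ℝ) • (f (f x) + f x) ∈ Module.End.eigenspace f 1 :=
      Module.End.mem_eigenspace_iff.mpr
        (by rw [LinearMap.map_smul, LinearMap.map_add, hcube, one_smul, add_comm])
    have h2 : (2⁻¹ : ℝ) • (f (f x) - f x) ∈ Module.End.eigenspace f (-1) :=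
      Module.End.mem_eigenspace_iff.mpr
        (by rw [LinearMap.map_smul, LinearMap.map_sub, hcube]; module)
    have hxsum : x = (x - f (f x)) + (2⁻¹ : ℝ) • (f (f x) + f x) +
        (2⁻¹ : ℝ) • (f (f x) - f x) := by module
    rw [hxsum]
    exact add_mem (add_mem (Submodule.mem_iSup_of_mem (0 : ℝ) h0)
      (Submodule.mem_iSup_of_mem (1 : ℝ) h1)) (Submodule.mem_iSup_of_mem (-1 : ℝ) h2)
  · -- spanning
    rw [← hfdef]
    refine eq_top_iff.mpr fun x _ => ?_
    have hX := x.2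
    have hd := diag_zero a hX
    have hs := symm_a a hX
    have han := anti a hX
    set Xm : Matrix ι ι ℝ := (x : Matrix ι ι ℝ) with hXm
    set bv : ι → ℝ := fun k => if k = a ∨ k = b then 0 else Xm a k with hbv
    set rv : ι → ℝ := fun k => if k = a ∨ k = b then 0 else Xm b k with hrv
    set Km : Matrix ι ι ℝ :=
      Xm - Xm a b • Bv a (Pi.single b 1) - Bv a bv - Rv b rv with hKmdef
    have hKm : ∀ i j, Km i j = if i = a ∨ i = b ∨ j = a ∨ j = b then 0 else Xm i j :=
      K_entries a b hab hX
    have hKzero : ∀ i j, i = a ∨ i = b ∨ j = a ∨ j = b → Km i j = 0 := by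
      intro i j h; rw [hKm i j, if_pos h]
    have hKanti : ∀ i j, Km j i = -Km i j := by
      intro i j
      rw [hKm, hKm]
      by_cases h : i = a ∨ i = b ∨ j = a ∨ j = b
      · rw [if_pos h, if_pos (by tauto), neg_zero]
      · push_neg at h
        rw [if_neg (by tauto), if_neg (by tauto)]
        exact han i j h.1 h.2.2.1
    -- range membership lemmas
    have hBv_mem : ∀ (v : ι → ℝ) (hva : v a = 0), v b = 0 →
        (⟨Bv a v, mem_Bv a v hva⟩ : L) ∈ LinearMap.range f := by
      intro v hva hvb
      refine ⟨⟨Rv b v, mem_Rv a b hab v hva⟩, ?_⟩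
      apply Subtype.ext
      rw [hf]
      exact lie_m_Rv a b (Ne.symm hab) v hva hvb
    have hRv_mem : ∀ (v : ι → ℝ) (hva : v a = 0), v b = 0 →
        (⟨Rv b v, mem_Rv a b hab v hva⟩ : L) ∈ LinearMap.range f := by
      intro v hva hvb
      refine ⟨⟨Bv a v, mem_Bv a v hva⟩, ?_⟩
      apply Subtype.ext
      rw [hf]
      exact lie_m_Bv a b (Ne.symm hab) v hva hvb
    -- zero conditions
    have hbva : bv a = 0 := by simp [hbv]
    have hbvb : bv b = 0 := by simp [hbv]
    have hrva : rv a = 0 := by simp [hrv]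
    have hrvb : rv b = 0 := by simp [hrv]
    have hwa : ∀ j : ι, (if j = a ∨ j = b then (0 : ι → ℝ) else Pi.single j 1) a = 0 := by
      intro j
      by_cases hj : j = a ∨ j = b
      · simp [hj]
      · push_neg at hj
        simp [hj, Pi.single_apply, Ne.symm hj.1]
    have hwb : ∀ j : ι, (if j = a ∨ j = b then (0 : ι → ℝ) else Pi.single j 1) b = 0 := by
      intro j
      by_cases hj : j = a ∨ j = b
      · simp [hj]
      · push_neg at hj
        simp [hj, Pi.single_apply, Ne.symm hj.2]
    have hKma : ∀ j : ι, (fun i => Km i j) a = 0 := fun j => hKzero a j (Or.inl rfl)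
    have hKmb : ∀ j : ι, (fun i => Km i j) b = 0 := fun j => hKzero b j (Or.inr (Or.inl rfl))
    -- the decomposition
    have keyM : Xm = Xm a b • Bv a (Pi.single b 1) + Bv a bv + Rv b rv + Km := by
      rw [hKmdef]; abel
    rw [Ksum a b Km hKanti hKzero] at keyM
    have hco : ∀ j : ι, (((2⁻¹ : ℝ) •
        ⁅(⟨Bv a (fun i => Km i j), mem_Bv a _ (hKma j)⟩ : L),
          (⟨Bv a (if j = a ∨ j = b then (0 : ι → ℝ) else Pi.single j 1),
            mem_Bv a _ (hwa j)⟩ : L)⁆ : L) : Matrix ι ι ℝ) =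
        (2⁻¹ : ℝ) • (vecMulVec (fun i => Km i j)
            (if j = a ∨ j = b then (0 : ι → ℝ) else Pi.single j 1)
          - vecMulVec (if j = a ∨ j = b then (0 : ι → ℝ) else Pi.single j 1)
            (fun i => Km i j)) := by
      intro j
      have hsmul : ∀ (c : ℝ) (z : L), ((c • z : L) : Matrix ι ι ℝ) =
          c • (z : Matrix ι ι ℝ) := fun _ _ => rfl
      rw [hsmul, LieSubalgebra.coe_bracket, lie_Bv_Bv a _ _ (hKma j) (hwa j)]
    have key : x = Xm a b • (⟨Bv a (Pi.single b 1), hMem⟩ : L)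
        + ⟨Bv a bv, mem_Bv a bv hbva⟩ + ⟨Rv b rv, mem_Rv a b hab rv hrva⟩
        + ∑ j : ι, (2⁻¹ : ℝ) •
            ⁅(⟨Bv a (fun i => Km i j), mem_Bv a _ (hKma j)⟩ : L),
              (⟨Bv a (if j = a ∨ j = b then (0 : ι → ℝ) else Pi.single j 1),
                mem_Bv a _ (hwa j)⟩ : L)⁆ := by
      apply Subtype.ext
      have hout : ∀ u v w z : L, ((u + v + w + z : L) : Matrix ι ι ℝ) =
          (u : Matrix ι ι ℝ) + v + w + z := fun _ _ _ _ => rfl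
      rw [hout, AddSubmonoidClass.coe_finset_sum,
        Finset.sum_congr rfl (fun j _ => hco j)]
      exact keyM
    rw [key]
    refine add_mem (add_mem (add_mem ?_ ?_) ?_) ?_
    · exact Submodule.mem_sup_left (Submodule.mem_sup_left
        (Submodule.smul_mem _ _ (Submodule.mem_span_singleton_self _)))
    · exact Submodule.mem_sup_left (Submodule.mem_sup_right (hBv_mem bv hbva hbvb))
    · exact Submodule.mem_sup_left (Submodule.mem_sup_right (hRv_mem rv hrva hrvb))
    · exact Submodule.sum_mem _ fun j _ => Submodule.mem_sup_right
        (Submodule.smul_mem _ _ (Submodule.subset_span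
          ⟨_, hBv_mem _ (hKma j) (hKmb j), _, hBv_mem _ (hwa j) (hwb j), rfl⟩))

end

end SO1nAux

/-- In `so(1,n)` (with metric `g = diag(1,-1,…,-1)`, indices `0,…,n`), each boost
generator `m_{0ν} = E(0,ν) + E(ν,0)` with `1 ≤ ν ≤ n` is essential. -/
theorem so_one_n_boost_essential (n : ℕ) (hn : 2 ≤ n) (ν : Fin (n + 1)) (hν : ν ≠ 0) :
    Essential
      (⟨Matrix.single (0 : Fin (n + 1)) ν (1 : ℝ) + Matrix.single ν (0 : Fin (n + 1)) 1,
          boost_mem_lieSO (fun i => if i = 0 then (1 : ℝ) else -1) 0 ν (by simp)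
            (by simp [hν])⟩ :
        lieSO (diagonal fun i : Fin (n + 1) => if i = 0 then (1 : ℝ) else -1)) := by
  refine SO1nAux.main_aux 0 ν hν _ ?_
  show Matrix.single (0 : Fin (n + 1)) ν (1 : ℝ) + Matrix.single ν 0 1 = _
  rw [SO1nAux.Bv, single_eq_single_vecMulVec_single,
    single_eq_single_vecMulVec_single]
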